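/- Assume Σ_{ℓℓ} > 0 for every ℓ, and suppose (π; ν_1,…,ν_d) satisfies the basic adjoint relationship (BAR) for (Σ, μ, R). Then for each ℓ ∈ {1,…,d}: (i) for all t < 0, -( (1/2) Σ_{ℓℓ} t + μ_ℓ ) φ(t e_ℓ) = Σ_{j=1}^d R_{ℓj} φ_j(t e_ℓ), where t e_ℓ is the vector with t in coordinate ℓ and 0 elsewhere; (ii) for every t < min(0, -2μ_ℓ/Σ_{ℓℓ}), Σ_{j=1}^d R_{ℓj} φ_j(t e_ℓ) > 0; (iii) lim_{t→-∞} Σ_{j=1}^d R_{ℓj} φ_j(t e_ℓ) = R_{ℓℓ} ν_ℓ(ℝ₊^d), and hence R_{ℓℓ} ν_ℓ(ℝ₊^d) ≥ 0; and (iv) π({x ∈ ℝ₊^d : x_ℓ = 0}) = 0. -/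

import Mathlib

open Matrix MeasureTheory Filter

private lemma aux_cont {d : ℕ} (ℓ : Fin d) (t : ℝ) :
    Continuous (fun x : Fin d → ℝ => Real.exp (t * x ℓ)) :=
  Real.continuous_exp.comp (continuous_const.mul (continuous_apply ℓ))

private lemma aux_integrable {d : ℕ} (m : Measure (Fin d → ℝ)) [IsFiniteMeasure m]
    (hsupp : m {x : Fin d → ℝ | ¬ ∀ i, 0 ≤ x i} = 0) (ℓ : Fin d) {t : ℝ} (ht : t ≤ 0) :
    Integrable (fun x : Fin d → ℝ => Real.exp (t * x ℓ)) m := by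
  have hae : ∀ᵐ x ∂m, ∀ i, 0 ≤ x i := by rw [ae_iff]; exact hsupp
  refine (integrable_const (1:ℝ)).mono' (aux_cont ℓ t).aestronglyMeasurable ?_
  filter_upwards [hae] with x hx
  rw [Real.norm_eq_abs, abs_of_pos (Real.exp_pos _)]
  exact Real.exp_le_one_iff.mpr (mul_nonpos_iff.mpr (Or.inr ⟨ht, hx ℓ⟩))

private lemma aux_measset {d : ℕ} (ℓ : Fin d) :
    MeasurableSet {x : Fin d → ℝ | x ℓ = 0} :=
  measurable_pi_apply ℓ (measurableSet_singleton 0)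

private lemma aux_tendsto {d : ℕ} (m : Measure (Fin d → ℝ)) [IsFiniteMeasure m]
    (hsupp : m {x : Fin d → ℝ | ¬ ∀ i, 0 ≤ x i} = 0) (ℓ : Fin d) :
    Tendsto (fun t : ℝ => ∫ x, Real.exp (t * x ℓ) ∂m) atBot
      (nhds ((m {x : Fin d → ℝ | x ℓ = 0}).toReal)) := by
  have hae : ∀ᵐ x ∂m, ∀ i, 0 ≤ x i := by rw [ae_iff]; exact hsupp
  have hlim : Tendsto (fun t : ℝ => ∫ x, Real.exp (t * x ℓ) ∂m) atBot
      (nhds (∫ x, Set.indicator {x : Fin d → ℝ | x ℓ = 0} (fun _ => (1:ℝ)) x ∂m)) := by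
    apply tendsto_integral_filter_of_dominated_convergence (fun _ => (1:ℝ))
    · exact Eventually.of_forall fun t => (aux_cont ℓ t).aestronglyMeasurable
    · filter_upwards [eventually_le_atBot (0:ℝ)] with t ht
      filter_upwards [hae] with x hx
      rw [Real.norm_eq_abs, abs_of_pos (Real.exp_pos _)]
      exact Real.exp_le_one_iff.mpr (mul_nonpos_iff.mpr (Or.inr ⟨ht, hx ℓ⟩))
    · exact integrable_const 1
    · filter_upwards [hae] with x hx
      rcases eq_or_lt_of_le (hx ℓ) with h0 | h0
      · have hx0 : x ℓ = 0 := h0.symm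
        have hmem : x ∈ {x : Fin d → ℝ | x ℓ = 0} := hx0
        have hfun : (fun t : ℝ => Real.exp (t * x ℓ)) = fun _ => 1 := by
          funext t; rw [hx0, mul_zero, Real.exp_zero]
        rw [hfun, Set.indicator_of_mem hmem]
        exact tendsto_const_nhds
      · have h1 : Tendsto (fun t : ℝ => t * x ℓ) atBot atBot :=
          tendsto_id.atBot_mul_const h0
        have h2 := Real.tendsto_exp_atBot.comp h1
        have hnmem : x ∉ {x : Fin d → ℝ | x ℓ = 0} := h0.ne'
        rw [Set.indicator_of_notMem hnmem]
        exact h2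
  rwa [integral_indicator_const (1:ℝ) (aux_measset ℓ), smul_eq_mul, mul_one] at hlim

private lemma aux_pos {d : ℕ} (m : Measure (Fin d → ℝ)) [IsProbabilityMeasure m]
    (hsupp : m {x : Fin d → ℝ | ¬ ∀ i, 0 ≤ x i} = 0) (ℓ : Fin d) {t : ℝ} (ht : t ≤ 0) :
    0 < ∫ x, Real.exp (t * x ℓ) ∂m := by
  rw [integral_pos_iff_support_of_nonneg (fun x => (Real.exp_pos _).le)
    (aux_integrable m hsupp ℓ ht)]
  have hsup : Function.support (fun x : Fin d → ℝ => Real.exp (t * x ℓ)) = Set.univ :=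
    Set.eq_univ_of_forall fun x => Real.exp_ne_zero _
  rw [hsup, measure_univ]
  norm_num

/-- Suppose `Σ_{ℓℓ} > 0` for every `ℓ` and `(π; ν_1,…,ν_d)` satisfies
the basic adjoint relationship (BAR) for `(Σ, μ, R)`. Then for each `ℓ`:
(i) for all `t < 0`, `-((1/2)Σ_{ℓℓ}t + μ_ℓ) φ(t e_ℓ) = ∑_j R_{ℓj} φ_j(t e_ℓ)`;
(ii) for every `t < min(0, -2μ_ℓ/Σ_{ℓℓ})`, `∑_j R_{ℓj} φ_j(t e_ℓ) > 0`;
(iii) `∑_j R_{ℓj} φ_j(t e_ℓ) → R_{ℓℓ} ν_ℓ(ℝ₊^d)` as `t → -∞`, hence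
`R_{ℓℓ} ν_ℓ(ℝ₊^d) ≥ 0`; and (iv) `π({x : x_ℓ = 0}) = 0`. -/
theorem statement15 (d : ℕ) (hd : 1 ≤ d)
    (S : Matrix (Fin d) (Fin d) ℝ) (hSsymm : S.IsSymm)
    (μ : Fin d → ℝ) (R : Matrix (Fin d) (Fin d) ℝ)
    (hSd : ∀ ℓ, 0 < S ℓ ℓ)
    (π : Measure (Fin d → ℝ)) [IsProbabilityMeasure π]
    (hπsupp : π {x : Fin d → ℝ | ¬ ∀ i, 0 ≤ x i} = 0)
    (ν : Fin d → Measure (Fin d → ℝ))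
    (hνfin : ∀ i, IsFiniteMeasure (ν i))
    (hνne : ∀ i, ν i ≠ 0)
    (hνsupp : ∀ i, ν i {x : Fin d → ℝ | ¬ ∀ m, 0 ≤ x m} = 0)
    (hνconc : ∀ i, ν i {x : Fin d → ℝ | x i ≠ 0} = 0)
    (hνpair : ∀ i j : Fin d, i ≠ j → ν i {x : Fin d → ℝ | x i = 0 ∧ x j = 0} = 0)
    (φ : (Fin d → ℝ) → ℝ) (hφ : ∀ θ, φ θ = ∫ x, Real.exp (θ ⬝ᵥ x) ∂π)
    (φb : Fin d → (Fin d → ℝ) → ℝ)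
    (hφb : ∀ i θ, φb i θ = ∫ x, Real.exp (θ ⬝ᵥ x) ∂(ν i))
    (hBAR : ∀ θ : Fin d → ℝ, (∀ m, θ m ≤ 0) →
      (-(1/2 : ℝ) * (θ ⬝ᵥ S.mulVec θ) - μ ⬝ᵥ θ) * φ θ
        = ∑ i, ((fun m => R m i) ⬝ᵥ θ) * φb i θ) :
    ∀ ℓ : Fin d,
      (∀ t : ℝ, t < 0 →
        -((1/2 : ℝ) * S ℓ ℓ * t + μ ℓ) * φ (fun m => if m = ℓ then t else 0)
          = ∑ j, R ℓ j * φb j (fun m => if m = ℓ then t else 0))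
      ∧ (∀ t : ℝ, t < min 0 (-2 * μ ℓ / S ℓ ℓ) →
          0 < ∑ j, R ℓ j * φb j (fun m => if m = ℓ then t else 0))
      ∧ Tendsto (fun t : ℝ => ∑ j, R ℓ j * φb j (fun m => if m = ℓ then t else 0))
          atBot (nhds (R ℓ ℓ * (ν ℓ Set.univ).toReal))
      ∧ 0 ≤ R ℓ ℓ * (ν ℓ Set.univ).toReal
      ∧ π {x : Fin d → ℝ | x ℓ = 0} = 0 := by
  intro ℓ
  -- dot product computations
  have hdot : ∀ (t : ℝ) (x : Fin d → ℝ),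
      (fun m => if m = ℓ then t else 0) ⬝ᵥ x = t * x ℓ := by
    intro t x
    simp [dotProduct, ite_mul, Finset.sum_ite_eq']
  have hdotμ : ∀ t : ℝ, μ ⬝ᵥ (fun m => if m = ℓ then t else 0) = μ ℓ * t := by
    intro t
    simp [dotProduct, mul_ite, Finset.sum_ite_eq']
  have hdotR : ∀ (i : Fin d) (t : ℝ),
      (fun m => R m i) ⬝ᵥ (fun m => if m = ℓ then t else 0) = R ℓ i * t := by
    intro i t
    simp [dotProduct, mul_ite, Finset.sum_ite_eq']
  have hquad : ∀ t : ℝ,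
      (fun m => if m = ℓ then t else 0) ⬝ᵥ
        S.mulVec (fun m => if m = ℓ then t else 0) = t * (S ℓ ℓ * t) := by
    intro t
    simp [Matrix.mulVec, dotProduct, mul_ite, ite_mul, mul_zero, zero_mul,
      Finset.sum_ite_eq', Finset.sum_ite_eq]
  have hφ' : ∀ t : ℝ, φ (fun m => if m = ℓ then t else 0)
      = ∫ x, Real.exp (t * x ℓ) ∂π := by
    intro t
    rw [hφ]
    congr 1
    funext x
    rw [hdot]
  have hφb' : ∀ (j : Fin d) (t : ℝ), φb j (fun m => if m = ℓ then t else 0)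
      = ∫ x, Real.exp (t * x ℓ) ∂(ν j) := by
    intro j t
    rw [hφb]
    congr 1
    funext x
    rw [hdot]
  -- part (i)
  have part1 : ∀ t : ℝ, t < 0 →
      -((1/2 : ℝ) * S ℓ ℓ * t + μ ℓ) * φ (fun m => if m = ℓ then t else 0)
        = ∑ j, R ℓ j * φb j (fun m => if m = ℓ then t else 0) := by
    intro t ht
    have hθle : ∀ m : Fin d, (if m = ℓ then t else 0) ≤ 0 := by
      intro m; split
      · exact ht.le
      · exact le_rfl
    have key := hBAR (fun m => if m = ℓ then t else 0) hθle
    rw [hdotμ t, hquad t] at key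
    simp only [hdotR] at key
    refine mul_left_cancel₀ (ne_of_lt ht) ?_
    rw [Finset.mul_sum]
    calc t * (-((1/2 : ℝ) * S ℓ ℓ * t + μ ℓ) * φ (fun m => if m = ℓ then t else 0))
        = (-(1/2 : ℝ) * (t * (S ℓ ℓ * t)) - μ ℓ * t) *
            φ (fun m => if m = ℓ then t else 0) := by ring
      _ = ∑ i, (R ℓ i * t) * φb i (fun m => if m = ℓ then t else 0) := key
      _ = ∑ i, t * (R ℓ i * φb i (fun m => if m = ℓ then t else 0)) := by
            apply Finset.sum_congr rfl
            intro i _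
            ring
  -- part (ii)
  have hφpos : ∀ t : ℝ, t ≤ 0 → 0 < φ (fun m => if m = ℓ then t else 0) := by
    intro t ht
    rw [hφ' t]
    exact aux_pos π hπsupp ℓ ht
  have part2 : ∀ t : ℝ, t < min 0 (-2 * μ ℓ / S ℓ ℓ) →
      0 < ∑ j, R ℓ j * φb j (fun m => if m = ℓ then t else 0) := by
    intro t ht
    have ht0 : t < 0 := lt_of_lt_of_le ht (min_le_left _ _)
    rw [← part1 t ht0]
    apply mul_pos _ (hφpos t ht0.le)
    have ht2 : t < -2 * μ ℓ / S ℓ ℓ := lt_of_lt_of_le ht (min_le_right _ _)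
    have hS := hSd ℓ
    rw [lt_div_iff₀ hS] at ht2
    nlinarith
  -- null sets for the ν j
  have hν0 : ∀ j : Fin d, j ≠ ℓ → ν j {x : Fin d → ℝ | x ℓ = 0} = 0 := by
    intro j hj
    have hsub : {x : Fin d → ℝ | x ℓ = 0} ⊆
        {x : Fin d → ℝ | x j ≠ 0} ∪ {x : Fin d → ℝ | x j = 0 ∧ x ℓ = 0} := by
      intro x hx
      by_cases hxj : x j = 0
      · exact Or.inr ⟨hxj, hx⟩
      · exact Or.inl hxj
    exact measure_mono_null hsub (measure_union_null (hνconc j) (hνpair j ℓ hj))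
  have hνℓ : ν ℓ {x : Fin d → ℝ | x ℓ = 0} = ν ℓ Set.univ := by
    have h := measure_add_measure_compl (μ := ν ℓ) (aux_measset ℓ)
    have hc : (ν ℓ) {x : Fin d → ℝ | x ℓ = 0}ᶜ = 0 := by
      have : {x : Fin d → ℝ | x ℓ = 0}ᶜ = {x : Fin d → ℝ | x ℓ ≠ 0} := rfl
      rw [this]
      exact hνconc ℓ
    rw [hc, add_zero] at h
    exact h
  -- part (iii)
  have part3 : Tendsto
      (fun t : ℝ => ∑ j, R ℓ j * φb j (fun m => if m = ℓ then t else 0))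
      atBot (nhds (R ℓ ℓ * (ν ℓ Set.univ).toReal)) := by
    have hsum : Tendsto
        (fun t : ℝ => ∑ j, R ℓ j * φb j (fun m => if m = ℓ then t else 0))
        atBot (nhds (∑ j, R ℓ j * ((ν j) {x : Fin d → ℝ | x ℓ = 0}).toReal)) := by
      simp only [hφb']
      apply tendsto_finset_sum
      intro j _
      haveI := hνfin j
      exact (aux_tendsto (ν j) (hνsupp j) ℓ).const_mul _
    have heq : ∑ j, R ℓ j * ((ν j) {x : Fin d → ℝ | x ℓ = 0}).toReal
        = R ℓ ℓ * (ν ℓ Set.univ).toReal := by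
      rw [Finset.sum_eq_single ℓ]
      · rw [hνℓ]
      · intro j _ hj
        rw [hν0 j hj]
        simp
      · simp
    rwa [heq] at hsum
  -- part (iv)
  have part4 : 0 ≤ R ℓ ℓ * (ν ℓ Set.univ).toReal := by
    refine ge_of_tendsto part3 ?_
    filter_upwards [eventually_lt_atBot (min 0 (-2 * μ ℓ / S ℓ ℓ))] with t ht
    exact (part2 t ht).le
  -- part (v)
  have part5 : π {x : Fin d → ℝ | x ℓ = 0} = 0 := by
    by_contra hne
    have hp : 0 < (π {x : Fin d → ℝ | x ℓ = 0}).toReal :=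
      ENNReal.toReal_pos hne (measure_ne_top π _)
    set p := (π {x : Fin d → ℝ | x ℓ = 0}).toReal with hpdef
    have hφlb : ∀ t : ℝ, t ≤ 0 → p ≤ ∫ x, Real.exp (t * x ℓ) ∂π := by
      intro t ht
      have hind : Integrable
          (Set.indicator {x : Fin d → ℝ | x ℓ = 0} (fun _ => (1:ℝ))) π :=
        (integrable_const 1).indicator (aux_measset ℓ)
      have hpint : p = ∫ x, Set.indicator {x : Fin d → ℝ | x ℓ = 0}
          (fun _ => (1:ℝ)) x ∂π := by
        rw [integral_indicator_const (1:ℝ) (aux_measset ℓ), smul_eq_mul, mul_one]; exact hpdef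
      rw [hpint]
      apply integral_mono hind (aux_integrable π hπsupp ℓ ht)
      intro x
      by_cases hx : x ℓ = 0
      · have hmem : x ∈ {x : Fin d → ℝ | x ℓ = 0} := hx
        rw [Set.indicator_of_mem hmem]
        simp [hx]
      · have hnmem : x ∉ {x : Fin d → ℝ | x ℓ = 0} := hx
        rw [Set.indicator_of_notMem hnmem]
        exact (Real.exp_pos _).le
    have hc : Tendsto (fun t : ℝ => -((1/2 : ℝ) * S ℓ ℓ * t + μ ℓ) * p)
        atBot atTop := by
      have h1 : Tendsto (fun t : ℝ => t * ((1/2 : ℝ) * S ℓ ℓ * p)) atBot atBot :=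
        tendsto_id.atBot_mul_const (mul_pos (mul_pos (by norm_num) (hSd ℓ)) hp)
      have h2 : Tendsto (fun t : ℝ => -(t * ((1/2 : ℝ) * S ℓ ℓ * p))) atBot atTop :=
        tendsto_neg_atBot_atTop.comp h1
      have h3 := tendsto_atTop_add_const_right atBot (-(μ ℓ * p)) h2
      have hfun : (fun t : ℝ => -((1/2 : ℝ) * S ℓ ℓ * t + μ ℓ) * p)
          = fun t : ℝ => -(t * ((1/2 : ℝ) * S ℓ ℓ * p)) + -(μ ℓ * p) := by
        funext t; ring
      rw [hfun]
      exact h3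
    have hcoef : ∀ᶠ t : ℝ in atBot, 0 ≤ -((1/2 : ℝ) * S ℓ ℓ * t + μ ℓ) := by
      filter_upwards [eventually_le_atBot (-2 * μ ℓ / S ℓ ℓ)] with t ht
      have hS := hSd ℓ
      rw [le_div_iff₀ hS] at ht
      nlinarith
    have hmono : ∀ᶠ t : ℝ in atBot,
        -((1/2 : ℝ) * S ℓ ℓ * t + μ ℓ) * p ≤
          ∑ j, R ℓ j * φb j (fun m => if m = ℓ then t else 0) := by
      filter_upwards [eventually_lt_atBot (0:ℝ), hcoef] with t ht hcn
      rw [← part1 t ht]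
      apply mul_le_mul_of_nonneg_left _ hcn
      rw [hφ' t]
      exact hφlb t ht.le
    have hatTop : Tendsto
        (fun t : ℝ => ∑ j, R ℓ j * φb j (fun m => if m = ℓ then t else 0))
        atBot atTop := tendsto_atTop_mono' atBot hmono hc
    exact not_tendsto_nhds_of_tendsto_atTop hatTop _ part3
  exact ⟨part1, part2, part3, part4, part5⟩
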